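/- For all m, n ∈ ℕ and every Lipschitz function f: ℓ_1 → ℝ with f(0)=0, the operators Q_n on Lip_0(ℓ_1) satisfy Q_m(Q_n(f)) = Q_{min(m,n)}(f). -/

import Mathlib

noncomputable section

open Filter Topology
open scoped Classical

/-- The sign `±1` associated with a Boolean. -/
def bsgn (b : Bool) : ℝ := if b then 1 else -1

/-- The hypercube `C(y,R) = {x : max_i |x_i − y_i| ≤ R/2}` with centre `y` and
edge length `R`. -/
def cube {n : ℕ} (y : Fin n → ℝ) (R : ℝ) : Set (Fin n → ℝ) :=
  {x | ∀ i, |x i - y i| ≤ R / 2}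

/-- The vertex `A_δ(y,R) = y + (R/2)δ` of the hypercube `C(y,R)`, `δ ∈ {−1,1}^n`. -/
def vertex {n : ℕ} (y : Fin n → ℝ) (R : ℝ) (δ : Fin n → Bool) : Fin n → ℝ :=
  fun i => y i + R / 2 * bsgn (δ i)

/-- A function `Φ` has property (AF) on a (convex) set `B ⊆ ℝ^n` if its restriction
to every segment contained in `B` and parallel to a coordinate axis is affine. -/
def HasAF {n : ℕ} (B : Set (Fin n → ℝ)) (Φ : (Fin n → ℝ) → ℝ) : Prop :=
  ∀ a b : Fin n → ℝ, a ∈ B → b ∈ B → (∃ i : Fin n, ∀ j, j ≠ i → a j = b j) →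
    ∀ t : ℝ, t ∈ Set.Icc (0 : ℝ) 1 →
      Φ (fun j => a j + t * (b j - a j)) = (1 - t) * Φ a + t * Φ b

/-- The coordinatewise-affine interpolation `Λ(f, C(y,R))` of `f` on the hypercube
`C(y,R)`: the unique function with property (AF) on `C(y,R)` agreeing with `f` at
all `2^n` vertices (written here in its explicit multilinear form). -/
def lam {n : ℕ} (f : (Fin n → ℝ) → ℝ) (y : Fin n → ℝ) (R : ℝ)
    (x : Fin n → ℝ) : ℝ :=
  ∑ δ : Fin n → Bool,
    (∏ i, if δ i then (x i - y i + R / 2) / R else 1 - (x i - y i + R / 2) / R) *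
      f (vertex y R δ)

/-- `g` is `L`-Lipschitz on the set `S` with respect to the `ℓ₁`-norm on `ℝ^n`. -/
def LipOnL1 {n : ℕ} (L : ℝ) (S : Set (Fin n → ℝ)) (g : (Fin n → ℝ) → ℝ) : Prop :=
  ∀ x ∈ S, ∀ x' ∈ S, |g x - g x'| ≤ L * ∑ i, |x i - x' i|
/-- `π_R(t)`: the nearest point to `t` in `[−R/2, R/2]`. -/
def clamp (R t : ℝ) : ℝ := max (-(R / 2)) (min (R / 2) t)

/-- `Π_R^n(x) = (π_R(x_1),…,π_R(x_n))`, the nearest-point retraction onto `C(0,R)`. -/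
def clampCube {n : ℕ} (R : ℝ) (x : Fin n → ℝ) : Fin n → ℝ := fun i => clamp R (x i)

/-- The point `x^{ε,y}_{h,k} = y + 2^{−k−1} ε + 2^{−k} (ε_1 h_1, …, ε_n h_n)`. -/
def gridPt {n : ℕ} (ε : Fin n → Bool) (y : Fin n → ℝ) (h : Fin n → ℕ) (k : ℕ) :
    Fin n → ℝ :=
  fun i => y i + (2 : ℝ) ^ (-(k : ℤ) - 1) * bsgn (ε i) +
    (2 : ℝ) ^ (-(k : ℤ)) * (bsgn (ε i) * (h i : ℝ))

/-- For `v ∈ C(0,2^n)`, an admissible choice of `ε ∈ {−1,1}^n` for a cube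
`C(x^{ε,0}_{h,n−1}, 2^{1−n})` of the canonical tiling containing `v`. -/
def epsChoice {n : ℕ} (v : Fin n → ℝ) : Fin n → Bool := fun i => 0 ≤ v i

/-- For `v ∈ C(0,2^n)`, an admissible choice of `h ∈ {0,…,2^{2n−2}−1}^n` for a cube
`C(x^{ε,0}_{h,n−1}, 2^{1−n})` of the canonical tiling containing `v`. -/
def hChoice (n : ℕ) (v : Fin n → ℝ) : Fin n → ℕ :=
  fun i => min (Int.toNat ⌊|v i| * (2 : ℝ) ^ ((n : ℤ) - 1)⌋) (2 ^ (2 * n - 2) - 1)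

/-- The operator `P_n`: `P_n(g)(u) = Λ(g, C(x^{ε,0}_{h,n−1}, 2^{1−n}))(Π_{2^n}^n(u))`,
where `ε ∈ {−1,1}^n` and `h ∈ {0,…,2^{2n−2}−1}^n` are (admissibly) chosen so that
`Π_{2^n}^n(u) ∈ C(x^{ε,0}_{h,n−1}, 2^{1−n})`. -/
def Pn (n : ℕ) (g : (Fin n → ℝ) → ℝ) (u : Fin n → ℝ) : ℝ :=
  lam g
    (gridPt (epsChoice (clampCube ((2 : ℝ) ^ n) u)) 0
      (hChoice n (clampCube ((2 : ℝ) ^ n) u)) (n - 1))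
    ((2 : ℝ) ^ (1 - (n : ℤ)))
    (clampCube ((2 : ℝ) ^ n) u)

/-- The Banach space `ℓ₁` of absolutely summable real sequences. -/
abbrev EllOne : Type := lp (fun _ : ℕ => ℝ) 1

/-- The canonical injection `τ_n : ℓ₁^n → ℓ₁`, `τ_n(x) = (x_1,…,x_n,0,0,…)`. -/
def tau (n : ℕ) (x : Fin n → ℝ) : EllOne :=
  ⟨fun j => if h : j < n then x ⟨j, h⟩ else 0, by
    refine (memℓp_zero ?_).of_exponent_ge zero_le
    refine (Set.finite_Iio n).subset fun j hj => ?_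
    simp only [Set.mem_setOf_eq] at hj
    by_contra hc
    simp only [Set.mem_Iio, not_lt] at hc
    exact hj (dif_neg (not_lt.mpr hc))⟩

/-- The canonical projection `ρ_n : ℓ₁ → ℓ₁^n`, `ρ_n(x) = (x_1,…,x_n)`. -/
def rho (n : ℕ) (x : EllOne) : Fin n → ℝ := fun i => x (i : ℕ)

/-- The operator `Q_n` on `Lip_0(ℓ₁)`: `Q_n(f)(x) = P_n(f ∘ τ_n)(ρ_n(x))`. -/
def Qn (n : ℕ) (f : EllOne → ℝ) (x : EllOne) : ℝ :=
  Pn n (fun u => f (tau n u)) (rho n x)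

/-- `V_n`: the set of all vertices of all the cubes `C(x^{ε,0}_{h,n−1}, 2^{1−n})`,
`ε ∈ {−1,1}^n`, `h ∈ {0,…,2^{2n−2}−1}^n`. -/
def Vn (n : ℕ) : Set (Fin n → ℝ) :=
  {v | ∃ (ε : Fin n → Bool) (h : Fin n → ℕ) (δ : Fin n → Bool),
    (∀ i, h i ≤ 2 ^ (2 * n - 2) - 1) ∧
    v = vertex (gridPt ε 0 h (n - 1)) ((2 : ℝ) ^ (1 - (n : ℤ))) δ}

open scoped NNReal
/-! ### Basic lemmas about `lam` -/

lemma bsgn_true : bsgn true = 1 := rfl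
lemma bsgn_false : bsgn false = -1 := rfl

lemma lam_congr {n : ℕ} {f g : (Fin n → ℝ) → ℝ} {y : Fin n → ℝ} {R : ℝ}
    (h : ∀ δ : Fin n → Bool, f (vertex y R δ) = g (vertex y R δ)) (x : Fin n → ℝ) :
    lam f y R x = lam g y R x :=
  Finset.sum_congr rfl fun δ _ => by rw [h δ]

lemma lam_vertex {n : ℕ} (f : (Fin n → ℝ) → ℝ) (y : Fin n → ℝ) {R : ℝ} (hR : R ≠ 0)
    (δ0 : Fin n → Bool) : lam f y R (vertex y R δ0) = f (vertex y R δ0) := by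
  unfold lam
  rw [Finset.sum_eq_single δ0]
  · have h1 : ∀ i, (if δ0 i then (vertex y R δ0 i - y i + R / 2) / R
        else 1 - (vertex y R δ0 i - y i + R / 2) / R) = 1 := by
      intro i
      cases h : δ0 i <;> simp [vertex, bsgn, h] <;> exact hR
    simp only [h1, Finset.prod_const_one, one_mul]
  · intro δ _ hne
    obtain ⟨i, hi⟩ : ∃ i, δ i ≠ δ0 i := Function.ne_iff.mp hne
    have h0 : (if δ i then (vertex y R δ0 i - y i + R / 2) / R
        else 1 - (vertex y R δ0 i - y i + R / 2) / R) = 0 := by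
      cases h : δ i
      · have h' : δ0 i = true := by cases h'' : δ0 i <;> simp_all
        simp [vertex, bsgn, h']
        field_simp
        norm_num
      · have h' : δ0 i = false := by cases h'' : δ0 i <;> simp_all
        simp [vertex, bsgn, h']
    rw [Finset.prod_eq_zero (Finset.mem_univ i) h0, zero_mul]
  · intro h; exact absurd (Finset.mem_univ δ0) h

lemma lam_consistent {n : ℕ} (f : (Fin n → ℝ) → ℝ) {y1 y2 : Fin n → ℝ} {R : ℝ}
    (hR : R ≠ 0) {x : Fin n → ℝ}
    (hyp : ∀ i, y1 i = y2 i ∨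
      ((y1 i - y2 i = R ∨ y2 i - y1 i = R) ∧ x i = (y1 i + y2 i) / 2)) :
    lam f y1 R x = lam f y2 R x := by
  classical
  set flip : (Fin n → Bool) → (Fin n → Bool) :=
    fun δ i => if y1 i = y2 i then δ i else !(δ i) with hflip
  have hbij : Function.Bijective flip := by
    have hinv : Function.Involutive flip := by
      intro δ; funext i; by_cases h : y1 i = y2 i <;> simp [hflip, h]
    exact hinv.bijective
  unfold lam
  refine Fintype.sum_bijective flip hbij _ _ fun δ => ?_
  -- coefficient products agree
  have hcoeff : ∀ i, (if δ i then (x i - y1 i + R / 2) / R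
        else 1 - (x i - y1 i + R / 2) / R) =
      (if flip δ i then (x i - y2 i + R / 2) / R
        else 1 - (x i - y2 i + R / 2) / R) := by
    intro i
    rcases hyp i with h | ⟨h1 | h1, h2⟩
    · simp [hflip, h]
    · -- y1 i = y2 i + R, x i midpoint
      have hx1 : (x i - y1 i + R / 2) / R = 0 := by
        rw [h2]; field_simp; linarith
      have hx2 : (x i - y2 i + R / 2) / R = 1 := by
        rw [h2]; field_simp; linarith
      have hne : ¬ (y1 i = y2 i) := by intro hh; rw [hh] at h1; simp at h1; exact hR h1.symm
      cases hδ : δ i <;> simp [hflip, hne, hδ, hx1, hx2]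
    · have hx1 : (x i - y1 i + R / 2) / R = 1 := by
        rw [h2]; field_simp; linarith
      have hx2 : (x i - y2 i + R / 2) / R = 0 := by
        rw [h2]; field_simp; linarith
      have hne : ¬ (y1 i = y2 i) := by
        intro hh; rw [hh] at h1; simp at h1; exact hR h1.symm
      cases hδ : δ i <;> simp [hflip, hne, hδ, hx1, hx2]
  have hprod : (∏ i, if δ i then (x i - y1 i + R / 2) / R
        else 1 - (x i - y1 i + R / 2) / R) =
      ∏ i, (if flip δ i then (x i - y2 i + R / 2) / R
        else 1 - (x i - y2 i + R / 2) / R) :=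
    Finset.prod_congr rfl fun i _ => hcoeff i
  by_cases hz : (∏ i, if δ i then (x i - y1 i + R / 2) / R
      else 1 - (x i - y1 i + R / 2) / R) = 0
  · rw [hz, ← hprod, hz, zero_mul, zero_mul]
  · -- all factors nonzero: vertices coincide
    have hv : vertex y1 R δ = vertex y2 R (flip δ) := by
      funext i
      rcases hyp i with h | ⟨h1 | h1, h2⟩
      · simp [vertex, hflip, h]
      · -- y1 i - y2 i = R ; coefficient forces δ i = false
        have hne : ¬ (y1 i = y2 i) := by
          intro hh; rw [hh] at h1; simp at h1; exact hR h1.symm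
        have hfac : (if δ i then (x i - y1 i + R / 2) / R
            else 1 - (x i - y1 i + R / 2) / R) ≠ 0 := by
          intro h0
          exact hz (Finset.prod_eq_zero (Finset.mem_univ i) h0)
        have hx1 : (x i - y1 i + R / 2) / R = 0 := by
          rw [h2]; field_simp; linarith
        have hδ : δ i = false := by
          cases hδ' : δ i
          · rfl
          · rw [hδ', if_pos rfl, hx1] at hfac; · exact absurd rfl hfac
        simp only [vertex, hflip, hne, if_false, hδ, Bool.not_false, bsgn_true,
          bsgn_false]
        linarith
      · have hne : ¬ (y1 i = y2 i) := by
          intro hh; rw [hh] at h1; simp at h1; exact hR h1.symm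
        have hfac : (if δ i then (x i - y1 i + R / 2) / R
            else 1 - (x i - y1 i + R / 2) / R) ≠ 0 := by
          intro h0
          exact hz (Finset.prod_eq_zero (Finset.mem_univ i) h0)
        have hx1 : (x i - y1 i + R / 2) / R = 1 := by
          rw [h2]; field_simp; linarith
        have hδ : δ i = true := by
          cases hδ' : δ i
          · rw [hδ', if_neg (by simp), hx1] at hfac; simp at hfac
          · rfl
        simp only [vertex, hflip, hne, if_false, hδ, Bool.not_true, bsgn_true,
          bsgn_false]
        linarith
    rw [hprod, hv]

lemma lam_multiaffine {n : ℕ} {ι : Type} [Fintype ι]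
    (P Q : Fin n → ι → ℝ) (C : ι → ℝ) (y : Fin n → ℝ) {R : ℝ} (hR : R ≠ 0)
    (x : Fin n → ℝ) :
    lam (fun z => ∑ j, (∏ i, (P i j + Q i j * z i)) * C j) y R x
      = ∑ j, (∏ i, (P i j + Q i j * x i)) * C j := by
  classical
  have key : ∀ j, (∑ δ : Fin n → Bool, ∏ i,
      ((if δ i then (x i - y i + R / 2) / R else 1 - (x i - y i + R / 2) / R) *
        (P i j + Q i j * vertex y R δ i))) = ∏ i, (P i j + Q i j * x i) := by
    intro j
    simp only [vertex]
    rw [← Fintype.piFinset_univ,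
      ← Finset.prod_univ_sum (fun _ => (Finset.univ : Finset Bool))
        (fun i b => (if b = true then (x i - y i + R / 2) / R
          else 1 - (x i - y i + R / 2) / R) * (P i j + Q i j * (y i + R / 2 * bsgn b)))]
    refine Finset.prod_congr rfl fun i _ => ?_
    rw [Fintype.sum_bool]
    simp only [vertex, bsgn, if_true, if_false, Bool.false_eq_true]
    field_simp
    ring
  unfold lam
  simp_rw [Finset.mul_sum]
  rw [Finset.sum_comm]
  refine Finset.sum_congr rfl fun j _ => ?_
  rw [← key j, Finset.sum_mul]
  refine Finset.sum_congr rfl fun δ _ => ?_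
  rw [Finset.prod_mul_distrib]
  ring
/-! ### Scalar grid lemmas -/

lemma zp_pos (a : ℤ) : (0:ℝ) < 2 ^ a := zpow_pos (by norm_num) a

lemma zp_add (a b : ℤ) : (2:ℝ) ^ (a + b) = 2 ^ a * 2 ^ b :=
  zpow_add₀ (by norm_num) a b

lemma zp_one_sub (n : ℤ) : (2:ℝ) ^ (1 - n) = 2 * 2 ^ (-n) := by
  rw [show (1 - n) = 1 + -n by ring, zp_add, zpow_one]

lemma zp_half (n : ℤ) : (2:ℝ) ^ (1 - n) / 2 = 2 ^ (-n) := by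
  rw [zp_one_sub]; ring

lemma pow_div_two (n : ℕ) : ((2:ℝ) ^ (n:ℕ)) / 2 = 2 ^ ((n:ℤ) - 1) := by
  rw [← zpow_natCast (2:ℝ) n, show ((n:ℤ) - 1) = (n:ℤ) + -1 by ring, zp_add]
  norm_num
  ring

/-- Scalar version of `epsChoice`. -/
def eC (v : ℝ) : Bool := 0 ≤ v

/-- Scalar version of `hChoice`. -/
def hC (n : ℕ) (v : ℝ) : ℕ :=
  min (Int.toNat ⌊|v| * (2:ℝ) ^ ((n:ℤ) - 1)⌋) (2 ^ (2 * n - 2) - 1)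

/-- Scalar version of the centre of the chosen cube. -/
def ctr (n : ℕ) (v : ℝ) : ℝ :=
  (2:ℝ) ^ (-(n:ℤ)) * bsgn (eC v) + (2:ℝ) ^ (1 - (n:ℤ)) * (bsgn (eC v) * hC n v)

lemma eC_true {v : ℝ} (h : 0 ≤ v) : eC v = true := decide_eq_true h
lemma eC_false {v : ℝ} (h : ¬ 0 ≤ v) : eC v = false := decide_eq_false h

lemma epsChoice_apply {k : ℕ} (v : Fin k → ℝ) (i : Fin k) : epsChoice v i = eC (v i) := rfl

lemma hChoice_apply {n : ℕ} (v : Fin n → ℝ) (i : Fin n) :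
    hChoice n v i = hC n (v i) := rfl

lemma cast_pred {n : ℕ} (hn : 0 < n) : ((n - 1 : ℕ) : ℤ) = (n:ℤ) - 1 := by omega

lemma center_apply {n : ℕ} (hn : 0 < n) (v : Fin n → ℝ) (i : Fin n) :
    gridPt (epsChoice v) 0 (hChoice n v) (n - 1) i = ctr n (v i) := by
  simp only [gridPt, ctr, Pi.zero_apply, epsChoice_apply, hChoice_apply, cast_pred hn,
    zero_add]
  rw [show (-((n:ℤ) - 1) - 1) = -(n:ℤ) by ring, show (-((n:ℤ) - 1)) = 1 - (n:ℤ) by ring]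

lemma ctr_of_nonneg {n : ℕ} {v : ℝ} (h : 0 ≤ v) :
    ctr n v = (2:ℝ) ^ (-(n:ℤ)) + (2:ℝ) ^ (1 - (n:ℤ)) * hC n v := by
  simp [ctr, eC_true h, bsgn]

lemma ctr_of_neg {n : ℕ} {v : ℝ} (h : v < 0) :
    ctr n v = -((2:ℝ) ^ (-(n:ℤ)) + (2:ℝ) ^ (1 - (n:ℤ)) * hC n v) := by
  simp [ctr, eC_false (not_le.mpr h), bsgn]; ring

lemma cast_cap {n : ℕ} (hn : 0 < n) :
    ((2 ^ (2 * n - 2) - 1 : ℕ) : ℝ) + 1 = (2:ℝ) ^ ((2*n - 2 : ℕ) : ℕ) := by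
  have h1 : (1:ℕ) ≤ 2 ^ (2 * n - 2) := Nat.one_le_two_pow
  push_cast [Nat.cast_sub h1]
  ring

lemma cap_pow {n : ℕ} (hn : 0 < n) :
    (2:ℝ) ^ (1 - (n:ℤ)) * (2:ℝ) ^ ((2*n - 2 : ℕ) : ℕ) = (2:ℝ) ^ ((n:ℤ) - 1) := by
  rw [← zpow_natCast (2:ℝ) (2*n-2), ← zp_add]
  congr 1
  omega

lemma hC_interval {n : ℕ} (hn : 0 < n) {v : ℝ} (hv : |v| ≤ (2:ℝ) ^ ((n:ℤ) - 1)) :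
    (2:ℝ) ^ (1 - (n:ℤ)) * hC n v ≤ |v| ∧ |v| ≤ (2:ℝ) ^ (1 - (n:ℤ)) * (hC n v + 1) := by
  set T : ℝ := |v| * (2:ℝ) ^ ((n:ℤ) - 1) with hT
  have hT0 : 0 ≤ T := mul_nonneg (abs_nonneg v) (zp_pos _).le
  have hfl0 : 0 ≤ ⌊T⌋ := Int.floor_nonneg.mpr hT0
  have hone : (2:ℝ) ^ (1 - (n:ℤ)) * (2:ℝ) ^ ((n:ℤ) - 1) = 1 := by
    rw [← zp_add, show (1 - (n:ℤ) + ((n:ℤ) - 1)) = 0 by ring]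
    norm_num
  have hvT : |v| = (2:ℝ) ^ (1 - (n:ℤ)) * T := by
    rw [hT, ← mul_assoc, mul_comm ((2:ℝ) ^ (1 - (n:ℤ))) |v|, mul_assoc, hone, mul_one]
  have hpos := zp_pos (1 - (n:ℤ))
  by_cases hcap : Int.toNat ⌊T⌋ ≤ 2 ^ (2 * n - 2) - 1
  · have hh : hC n v = Int.toNat ⌊T⌋ := by rw [hC, ← hT, min_eq_left hcap]
    have hcast : ((hC n v : ℕ) : ℝ) = (⌊T⌋ : ℝ) := by
      rw [hh]
      exact_mod_cast congrArg (Int.cast : ℤ → ℝ) (Int.toNat_of_nonneg hfl0)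
    constructor
    · rw [hvT, hcast]
      have := Int.floor_le T
      nlinarith
    · rw [hvT, hcast]
      have := Int.lt_floor_add_one T
      nlinarith
  · have hh : hC n v = 2 ^ (2 * n - 2) - 1 := by
      rw [hC, ← hT, min_eq_right (le_of_not_ge hcap)]
    -- here T ≥ 2^(2n-2)
    have h1 : (2 ^ (2*n-2) - 1 : ℕ) + 1 ≤ Int.toNat ⌊T⌋ := by omega
    have h2 : ((2 ^ (2*n-2) - 1 : ℕ) : ℝ) + 1 ≤ (⌊T⌋ : ℝ) := by
      have := Int.toNat_of_nonneg hfl0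
      have h3 : ((2 ^ (2*n-2) - 1 : ℕ) + 1 : ℤ) ≤ ⌊T⌋ := by
        omega
      exact_mod_cast h3
    have hTge : ((2 ^ (2*n-2) - 1 : ℕ) : ℝ) + 1 ≤ T := le_trans h2 (Int.floor_le T)
    have hcapT : ((2 ^ (2*n-2) - 1 : ℕ) : ℝ) ≤ T := by linarith
    constructor
    · rw [hvT, hh]
      exact mul_le_mul_of_nonneg_left hcapT hpos.le
    · rw [hh, cast_cap hn, cap_pow hn]
      exact hv
lemma ctr_mem {n : ℕ} (hn : 0 < n) {v : ℝ} (hv : |v| ≤ (2:ℝ) ^ ((n:ℤ) - 1)) :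
    |v - ctr n v| ≤ (2:ℝ) ^ (-(n:ℤ)) := by
  obtain ⟨hlo, hhi⟩ := hC_interval hn hv
  have h2 := zp_one_sub (n:ℤ)
  rcases le_or_gt 0 v with h | h
  · rw [ctr_of_nonneg h]
    rw [abs_of_nonneg h] at hlo hhi
    rw [abs_le]; constructor <;> nlinarith
  · rw [ctr_of_neg h]
    rw [abs_of_neg h] at hlo hhi
    rw [abs_le]; constructor <;> nlinarith

lemma ctr_lower_grid (n : ℕ) (v : ℝ) :
    ∃ k : ℤ, ctr n v - (2:ℝ) ^ (-(n:ℤ)) = (2:ℝ) ^ (1 - (n:ℤ)) * k := by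
  have h2 := zp_one_sub (n:ℤ)
  rcases le_or_gt 0 v with h | h
  · exact ⟨hC n v, by rw [ctr_of_nonneg h]; push_cast; ring⟩
  · exact ⟨-(hC n v + 1), by rw [ctr_of_neg h]; push_cast; nlinarith⟩

lemma ctr_odd (n : ℕ) (v : ℝ) :
    ∃ k : ℤ, ctr n v = (2:ℝ) ^ (-(n:ℤ)) * (2 * k + 1) := by
  have h2 := zp_one_sub (n:ℤ)
  rcases le_or_gt 0 v with h | h
  · exact ⟨hC n v, by rw [ctr_of_nonneg h]; push_cast; nlinarith⟩
  · exact ⟨-(hC n v + 1), by rw [ctr_of_neg h]; push_cast; nlinarith⟩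

/-! ### Scalar clamp lemmas -/

lemma clamp_eq (n : ℕ) (t : ℝ) :
    clamp ((2:ℝ) ^ n) t = max (-((2:ℝ) ^ ((n:ℤ) - 1))) (min ((2:ℝ) ^ ((n:ℤ) - 1)) t) := by
  rw [clamp, pow_div_two]

lemma clampCube_apply {n k : ℕ} (u : Fin k → ℝ) (i : Fin k) :
    clampCube ((2:ℝ) ^ n) u i = clamp ((2:ℝ) ^ n) (u i) := rfl

lemma clamp_abs_le (n : ℕ) (t : ℝ) : |clamp ((2:ℝ) ^ n) t| ≤ (2:ℝ) ^ ((n:ℤ) - 1) := by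
  have hB := zp_pos ((n:ℤ) - 1)
  rw [clamp_eq, abs_le]
  constructor
  · exact le_max_left _ _
  · exact max_le (by linarith) (min_le_left _ _)

lemma clamp_of_abs_le {n : ℕ} {t : ℝ} (h : |t| ≤ (2:ℝ) ^ ((n:ℤ) - 1)) :
    clamp ((2:ℝ) ^ n) t = t := by
  rw [abs_le] at h
  rw [clamp_eq, min_eq_right h.2, max_eq_right h.1]

lemma clamp_of_le {n : ℕ} {t : ℝ} (h : t ≤ -((2:ℝ) ^ ((n:ℤ) - 1))) :
    clamp ((2:ℝ) ^ n) t = -((2:ℝ) ^ ((n:ℤ) - 1)) := by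
  have hB := zp_pos ((n:ℤ) - 1)
  rw [clamp_eq, min_eq_right (by linarith), max_eq_left h]

lemma clamp_of_ge {n : ℕ} {t : ℝ} (h : (2:ℝ) ^ ((n:ℤ) - 1) ≤ t) :
    clamp ((2:ℝ) ^ n) t = (2:ℝ) ^ ((n:ℤ) - 1) := by
  have hB := zp_pos ((n:ℤ) - 1)
  rw [clamp_eq, min_eq_left h, max_eq_right (by linarith)]

lemma clamp_mono {n : ℕ} {s t : ℝ} (h : s ≤ t) :
    clamp ((2:ℝ) ^ n) s ≤ clamp ((2:ℝ) ^ n) t := by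
  rw [clamp_eq, clamp_eq]
  exact max_le_max le_rfl (min_le_min le_rfl h)

lemma clamp_lip (n : ℕ) (s t : ℝ) :
    |clamp ((2:ℝ) ^ n) s - clamp ((2:ℝ) ^ n) t| ≤ |s - t| := by
  rw [clamp_eq, clamp_eq]
  refine le_trans (abs_max_sub_max_le_max _ _ _ _) ?_
  rw [sub_self, abs_zero]
  refine max_le (abs_nonneg _) ?_
  refine le_trans (abs_min_sub_min_le_max _ _ _ _) ?_
  rw [sub_self, abs_zero]
  exact max_le (abs_nonneg _) le_rfl

lemma clamp_clamp {n m : ℕ} (hnm : n ≤ m) (t : ℝ) :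
    clamp ((2:ℝ) ^ n) (clamp ((2:ℝ) ^ m) t) = clamp ((2:ℝ) ^ n) t := by
  have hB : (2:ℝ) ^ ((n:ℤ) - 1) ≤ (2:ℝ) ^ ((m:ℤ) - 1) := by
    apply zpow_le_zpow_right₀ (by norm_num)
    omega
  have hBn := zp_pos ((n:ℤ) - 1)
  simp only [clamp_eq, max_def, min_def]
  split_ifs <;> linarith

lemma clamp_grid {n m : ℕ} (hn : 0 < n) (hm : 0 < m) (k : ℤ) :
    ∃ k' : ℤ, clamp ((2:ℝ) ^ n) ((2:ℝ) ^ (1 - (m:ℤ)) * k) = (2:ℝ) ^ (1 - (m:ℤ)) * k' := by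
  have hBgrid : (2:ℝ) ^ ((n:ℤ) - 1) = (2:ℝ) ^ (1 - (m:ℤ)) * ((2:ℤ) ^ (n + m - 2 : ℕ) : ℝ) := by
    push_cast
    rw [← zpow_natCast (2:ℝ) (n + m - 2), ← zp_add]
    congr 1
    omega
  set x : ℝ := (2:ℝ) ^ (1 - (m:ℤ)) * k
  rcases le_or_gt x (-((2:ℝ) ^ ((n:ℤ) - 1))) with h | h
  · refine ⟨-((2:ℤ) ^ (n + m - 2 : ℕ)), ?_⟩
    rw [clamp_of_le h, hBgrid]; push_cast; ring
  rcases le_or_gt ((2:ℝ) ^ ((n:ℤ) - 1)) x with h' | h'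
  · refine ⟨(2:ℤ) ^ (n + m - 2 : ℕ), ?_⟩
    rw [clamp_of_ge h', hBgrid]
    push_cast
    ring
  · exact ⟨k, clamp_of_abs_le (abs_le.mpr ⟨h.le, h'.le⟩)⟩

lemma grid_sep {d : ℝ} (hd : 0 < d) {j1 j2 : ℤ} (h : d * j1 < d * j2) :
    d * j1 + d ≤ d * j2 := by
  have h1 : (j1 : ℝ) < j2 := lt_of_mul_lt_mul_left h hd.le
  have h2 : j1 < j2 := by exact_mod_cast h1
  have h3 : (j1 : ℝ) + 1 ≤ j2 := by exact_mod_cast h2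
  nlinarith
lemma int_neg_step {d : ℝ} (hd : 0 < d) {z : ℤ} (h : d * z < 0) : d * z ≤ -d := by
  have hz : (z:ℝ) < 0 := by nlinarith
  have hz1 : z ≤ -1 := by
    have : z < 0 := by exact_mod_cast hz
    omega
  have hz2 : (z:ℝ) ≤ -1 := by exact_mod_cast hz1
  nlinarith

lemma int_pos_step {d : ℝ} (hd : 0 < d) {z : ℤ} (h : 0 < d * z) : d ≤ d * z := by
  have hz : (0:ℝ) < z := by nlinarith
  have hz1 : 1 ≤ z := by
    have : 0 < z := by exact_mod_cast hz
    omega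
  have hz2 : (1:ℝ) ≤ z := by exact_mod_cast hz1
  nlinarith

lemma clamp_affine_near {n m : ℕ} (hn : 0 < n) (hm : 0 < m) {cm : ℝ}
    (hodd : ∃ k : ℤ, cm = (2:ℝ) ^ (-(m:ℤ)) * (2 * k + 1)) :
    ∃ p q : ℝ, ∀ t : ℝ, |t - cm| ≤ (2:ℝ) ^ (-(m:ℤ)) →
      clamp ((2:ℝ) ^ n) t = p + q * t := by
  obtain ⟨k, hk⟩ := hodd
  have hpos := zp_pos (-(m:ℤ))
  have hB : (2:ℝ) ^ ((n:ℤ) - 1) = (2:ℝ) ^ (-(m:ℤ)) * (((2:ℤ) ^ (n + m - 1 : ℕ) : ℤ) : ℝ) := by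
    push_cast
    rw [← zpow_natCast (2:ℝ) (n + m - 1), ← zp_add]
    congr 1
    omega
  have hdvd : (2:ℤ) ∣ 2 ^ (n + m - 1 : ℕ) := dvd_pow_self 2 (by omega)
  have hBpos := zp_pos ((n:ℤ) - 1)
  have hE1 : cm + (2:ℝ) ^ ((n:ℤ) - 1) = (2:ℝ) ^ (-(m:ℤ)) * ((2 * k + 1 + 2 ^ (n + m - 1 : ℕ) : ℤ) : ℝ) := by
    rw [hk, hB]; push_cast; ring
  have hE2 : cm - (2:ℝ) ^ ((n:ℤ) - 1) = (2:ℝ) ^ (-(m:ℤ)) * ((2 * k + 1 - 2 ^ (n + m - 1 : ℕ) : ℤ) : ℝ) := by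
    rw [hk, hB]; push_cast; ring
  rcases lt_trichotomy cm (-((2:ℝ) ^ ((n:ℤ) - 1))) with h | h | h
  · refine ⟨-((2:ℝ) ^ ((n:ℤ) - 1)), 0, fun t ht => ?_⟩
    have h1 : (2:ℝ) ^ (-(m:ℤ)) * ((2 * k + 1 + 2 ^ (n + m - 1 : ℕ) : ℤ) : ℝ) < 0 := by
      rw [← hE1]; linarith
    have h2 := int_neg_step hpos h1
    rw [← hE1] at h2
    rw [abs_le] at ht
    rw [clamp_of_le (by linarith : t ≤ -((2:ℝ) ^ ((n:ℤ) - 1)))]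
    ring
  · exfalso
    have h1 : (2:ℝ) ^ (-(m:ℤ)) * ((2 * k + 1 + 2 ^ (n + m - 1 : ℕ) : ℤ) : ℝ) = 0 := by
      rw [← hE1]; linarith
    have h2 : ((2 * k + 1 + 2 ^ (n + m - 1 : ℕ) : ℤ) : ℝ) = 0 := by
      rcases mul_eq_zero.mp h1 with h' | h'
      · exact absurd h' (ne_of_gt hpos)
      · exact h'
    have h3 : (2 * k + 1 + 2 ^ (n + m - 1 : ℕ) : ℤ) = 0 := by exact_mod_cast h2
    omega
  rcases lt_trichotomy cm ((2:ℝ) ^ ((n:ℤ) - 1)) with h' | h' | h'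
  · refine ⟨0, 1, fun t ht => ?_⟩
    have h1 : 0 < (2:ℝ) ^ (-(m:ℤ)) * ((2 * k + 1 + 2 ^ (n + m - 1 : ℕ) : ℤ) : ℝ) := by
      rw [← hE1]; linarith
    have h2 := int_pos_step hpos h1
    rw [← hE1] at h2
    have h3 : (2:ℝ) ^ (-(m:ℤ)) * ((2 * k + 1 - 2 ^ (n + m - 1 : ℕ) : ℤ) : ℝ) < 0 := by
      rw [← hE2]; linarith
    have h4 := int_neg_step hpos h3
    rw [← hE2] at h4
    rw [abs_le] at ht
    rw [clamp_of_abs_le (abs_le.mpr ⟨by linarith, by linarith⟩)]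
    ring
  · exfalso
    have h1 : (2:ℝ) ^ (-(m:ℤ)) * ((2 * k + 1 - 2 ^ (n + m - 1 : ℕ) : ℤ) : ℝ) = 0 := by
      rw [← hE2]; linarith
    have h2 : ((2 * k + 1 - 2 ^ (n + m - 1 : ℕ) : ℤ) : ℝ) = 0 := by
      rcases mul_eq_zero.mp h1 with h'' | h''
      · exact absurd h'' (ne_of_gt hpos)
      · exact h''
    have h3 : (2 * k + 1 - 2 ^ (n + m - 1 : ℕ) : ℤ) = 0 := by exact_mod_cast h2
    omega
  · refine ⟨(2:ℝ) ^ ((n:ℤ) - 1), 0, fun t ht => ?_⟩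
    have h1 : 0 < (2:ℝ) ^ (-(m:ℤ)) * ((2 * k + 1 - 2 ^ (n + m - 1 : ℕ) : ℤ) : ℝ) := by
      rw [← hE2]; linarith
    have h2 := int_pos_step hpos h1
    rw [← hE2] at h2
    rw [abs_le] at ht
    rw [clamp_of_ge (by linarith : (2:ℝ) ^ ((n:ℤ) - 1) ≤ t)]
    ring
lemma psI_subset {n m : ℕ} (hn : 0 < n) (hnm : n < m) {cm : ℝ}
    (hodd : ∃ k : ℤ, cm = (2:ℝ) ^ (-(m:ℤ)) * (2 * k + 1)) {t : ℝ}
    (ht : |t - cm| ≤ (2:ℝ) ^ (-(m:ℤ))) :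
    |clamp ((2:ℝ) ^ n) t - ctr n (clamp ((2:ℝ) ^ n) cm)| ≤ (2:ℝ) ^ (-(n:ℤ)) := by
  have hm : 0 < m := hn.trans hnm
  obtain ⟨k, hk⟩ := hodd
  set a := clamp ((2:ℝ) ^ n) cm with ha
  set c2 := ctr n a with hc2
  have hmem : |a - c2| ≤ (2:ℝ) ^ (-(n:ℤ)) := ctr_mem hn (clamp_abs_le n cm)
  obtain ⟨k2, hk2⟩ := ctr_lower_grid n a
  have hpowmn : (2:ℝ) ^ (1 - (n:ℤ)) = (2:ℝ) ^ (1 - (m:ℤ)) * (((2:ℤ) ^ (m - n : ℕ) : ℤ) : ℝ) := by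
    push_cast
    rw [← zpow_natCast (2:ℝ) (m - n), ← zp_add]
    congr 1
    omega
  have hLc : c2 - (2:ℝ) ^ (-(n:ℤ)) = (2:ℝ) ^ (1 - (m:ℤ)) * ((2 ^ (m - n : ℕ) * k2 : ℤ) : ℝ) := by
    rw [hk2, hpowmn]; push_cast; ring
  have hcm1 : cm - (2:ℝ) ^ (-(m:ℤ)) = (2:ℝ) ^ (1 - (m:ℤ)) * (k : ℝ) := by
    rw [hk, zp_one_sub]; ring
  have hcm2 : cm + (2:ℝ) ^ (-(m:ℤ)) = (2:ℝ) ^ (1 - (m:ℤ)) * ((k + 1 : ℤ) : ℝ) := by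
    rw [hk, zp_one_sub]; push_cast; ring
  obtain ⟨j1, hj1⟩ := clamp_grid hn hm k
  obtain ⟨j2, hj2⟩ := clamp_grid hn hm (k + 1)
  set e1 := clamp ((2:ℝ) ^ n) (cm - (2:ℝ) ^ (-(m:ℤ))) with he1
  set e2 := clamp ((2:ℝ) ^ n) (cm + (2:ℝ) ^ (-(m:ℤ))) with he2
  have hje1 : e1 = (2:ℝ) ^ (1 - (m:ℤ)) * (j1 : ℝ) := by rw [he1, hcm1]; exact_mod_cast hj1
  have hje2 : e2 = (2:ℝ) ^ (1 - (m:ℤ)) * (j2 : ℝ) := by rw [he2, hcm2]; exact_mod_cast hj2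
  rw [abs_le] at ht
  have hmono1 : e1 ≤ clamp ((2:ℝ) ^ n) t := clamp_mono (by linarith)
  have hmono2 : clamp ((2:ℝ) ^ n) t ≤ e2 := clamp_mono (by linarith)
  have hlip1 : |a - e1| ≤ (2:ℝ) ^ (-(m:ℤ)) := by
    refine le_trans (clamp_lip n cm _) ?_
    rw [abs_le]; constructor <;> simp <;> linarith [zp_pos (-(m:ℤ))]
  have hlip2 : |e2 - a| ≤ (2:ℝ) ^ (-(m:ℤ)) := by
    refine le_trans (clamp_lip n _ cm) ?_
    rw [abs_le]; constructor <;> simp <;> linarith [zp_pos (-(m:ℤ))]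
  rw [abs_le] at hmem hlip1 hlip2
  have h1M := zp_pos (1 - (m:ℤ))
  have hM := zp_pos (-(m:ℤ))
  have h21M := zp_one_sub (m:ℤ)
  have h21N := zp_one_sub (n:ℤ)
  -- claim 1 : c2 - 2^{-N} ≤ e1
  have hclaim1 : c2 - (2:ℝ) ^ (-(n:ℤ)) ≤ e1 := by
    by_contra hcon
    push_neg at hcon
    rw [hje1, hLc] at hcon
    have := grid_sep h1M hcon
    rw [← hje1, ← hLc] at this
    linarith
  -- claim 2 : e2 ≤ c2 + 2^{-N}
  have hclaim2 : e2 ≤ c2 + (2:ℝ) ^ (-(n:ℤ)) := by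
    have hUc : c2 + (2:ℝ) ^ (-(n:ℤ)) =
        (2:ℝ) ^ (1 - (m:ℤ)) * ((2 ^ (m - n : ℕ) * k2 + 2 ^ (m - n : ℕ) : ℤ) : ℝ) := by
      have hN := zp_one_sub (n:ℤ)
      have : c2 + (2:ℝ) ^ (-(n:ℤ)) = (c2 - (2:ℝ) ^ (-(n:ℤ))) + (2:ℝ) ^ (1 - (n:ℤ)) := by
        rw [hN]; ring
      rw [this, hLc, hpowmn]
      push_cast
      ring
    by_contra hcon
    push_neg at hcon
    rw [hje2, hUc] at hcon
    have := grid_sep h1M hcon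
    rw [← hje2, ← hUc] at this
    linarith
  rw [abs_le]
  constructor <;> linarith

lemma interval_compat {n : ℕ} (hn : 0 < n) {a c2 : ℝ} (ha : |a| ≤ (2:ℝ) ^ ((n:ℤ) - 1))
    (h2 : |a - c2| ≤ (2:ℝ) ^ (-(n:ℤ)))
    (hc2 : ∃ k : ℤ, c2 - (2:ℝ) ^ (-(n:ℤ)) = (2:ℝ) ^ (1 - (n:ℤ)) * k) :
    ctr n a = c2 ∨ ((ctr n a - c2 = (2:ℝ) ^ (1 - (n:ℤ)) ∨ c2 - ctr n a = (2:ℝ) ^ (1 - (n:ℤ)))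
      ∧ a = (ctr n a + c2) / 2) := by
  have h1 : |a - ctr n a| ≤ (2:ℝ) ^ (-(n:ℤ)) := ctr_mem hn ha
  obtain ⟨k1, hk1⟩ := ctr_lower_grid n a
  obtain ⟨k2, hk2⟩ := hc2
  rw [abs_le] at h1 h2
  have hN := zp_pos (-(n:ℤ))
  have h1N := zp_pos (1 - (n:ℤ))
  have h21 := zp_one_sub (n:ℤ)
  have hb1 : (2:ℝ) ^ (1 - (n:ℤ)) * k1 ≤ (2:ℝ) ^ (1 - (n:ℤ)) * ((k2 + 1 : ℤ) : ℝ) := by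
    push_cast
    nlinarith [hk1, hk2]
  have hb2 : (2:ℝ) ^ (1 - (n:ℤ)) * k2 ≤ (2:ℝ) ^ (1 - (n:ℤ)) * ((k1 + 1 : ℤ) : ℝ) := by
    push_cast
    nlinarith [hk1, hk2]
  have hk12 : k1 ≤ k2 + 1 := by
    have := le_of_mul_le_mul_left hb1 h1N
    exact_mod_cast this
  have hk21 : k2 ≤ k1 + 1 := by
    have := le_of_mul_le_mul_left hb2 h1N
    exact_mod_cast this
  rcases (by omega : k1 = k2 ∨ k1 = k2 + 1 ∨ k2 = k1 + 1) with he | he | he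
  · left
    subst he
    linarith [hk1, hk2]
  · right
    subst he
    have hdist : ctr n a - c2 = (2:ℝ) ^ (1 - (n:ℤ)) := by
      push_cast at hk1
      nlinarith [hk1, hk2]
    refine ⟨Or.inl hdist, by linarith⟩
  · right
    subst he
    have hdist : c2 - ctr n a = (2:ℝ) ^ (1 - (n:ℤ)) := by
      push_cast at hk2
      nlinarith [hk1, hk2]
    refine ⟨Or.inr hdist, by linarith⟩

lemma vtx_scalar {n : ℕ} (hn : 0 < n) (s : Bool) (t : ℕ) (ht : t ≤ 2 ^ (2 * n - 2)) {v : ℝ}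
    (hv : v = bsgn s * ((2:ℝ) ^ (1 - (n:ℤ)) * t)) :
    ∃ b : Bool, v = ctr n v + (2:ℝ) ^ (-(n:ℤ)) * bsgn b := by
  have h1N := zp_pos (1 - (n:ℤ))
  have hN := zp_pos (-(n:ℤ))
  have h21 := zp_one_sub (n:ℤ)
  have hnn : (0:ℝ) ≤ (2:ℝ) ^ (1 - (n:ℤ)) * t := mul_nonneg h1N.le (Nat.cast_nonneg t)
  have habs : |v| = (2:ℝ) ^ (1 - (n:ℤ)) * t := by
    rw [hv]; cases s <;> simp [bsgn] <;> exact hnn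
  have hone : (2:ℝ) ^ (1 - (n:ℤ)) * (2:ℝ) ^ ((n:ℤ) - 1) = 1 := by
    rw [← zp_add, show (1 - (n:ℤ) + ((n:ℤ) - 1)) = 0 by ring]
    norm_num
  have hT : |v| * (2:ℝ) ^ ((n:ℤ) - 1) = (t : ℝ) := by
    rw [habs]
    nlinarith [hone]
  have hfloor : ⌊|v| * (2:ℝ) ^ ((n:ℤ) - 1)⌋ = (t : ℤ) := by
    rw [hT]
    exact_mod_cast Int.floor_natCast t
  have hHC : hC n v = min t (2 ^ (2 * n - 2) - 1) := by
    rw [hC, hfloor]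
    simp
  by_cases hcap : t ≤ 2 ^ (2 * n - 2) - 1
  · have hHC2 : hC n v = t := by rw [hHC, min_eq_left hcap]
    cases s
    · -- s = false : v = -(2^{1-N} t)
      by_cases ht0 : t = 0
      · subst ht0
        have hv0 : v = 0 := by rw [hv]; simp
        refine ⟨false, ?_⟩
        rw [ctr_of_nonneg (le_of_eq hv0.symm), hHC2, hv0]
        simp [bsgn]
      · have htpos : (0:ℝ) < (t:ℝ) := by
          have : 0 < t := Nat.pos_of_ne_zero ht0
          exact_mod_cast this
        have hvneg : v < 0 := by
          rw [hv, bsgn_false]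
          nlinarith
        refine ⟨true, ?_⟩
        rw [ctr_of_neg hvneg, hHC2, hv, bsgn_false, bsgn_true]
        ring
    · -- s = true : v = 2^{1-N} t ≥ 0
      have hvpos : 0 ≤ v := by rw [hv, bsgn_true]; linarith
      refine ⟨false, ?_⟩
      rw [ctr_of_nonneg hvpos, hHC2, hv, bsgn_true, bsgn_false]
      ring
  · have hteq : t = 2 ^ (2 * n - 2) := by omega
    have hHC2 : hC n v = 2 ^ (2 * n - 2) - 1 := by rw [hHC, min_eq_right (by omega)]
    have hcast : ((2 ^ (2 * n - 2) - 1 : ℕ) : ℝ) + 1 = (t : ℝ) := by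
      rw [cast_cap hn, hteq]
      push_cast
      ring
    cases s
    · have hvneg : v < 0 := by
        rw [hv, bsgn_false]
        have htpos : (0:ℝ) < (t:ℝ) := by
          have : 0 < t := by omega
          exact_mod_cast this
        nlinarith
      refine ⟨false, ?_⟩
      rw [ctr_of_neg hvneg, hHC2, hv, bsgn_false]
      linear_combination ((2:ℝ) ^ (1 - (n:ℤ))) * hcast - h21
    · have hvpos : 0 ≤ v := by rw [hv, bsgn_true]; linarith
      refine ⟨true, ?_⟩
      rw [ctr_of_nonneg hvpos, hHC2, hv, bsgn_true]
      linear_combination (-(2:ℝ) ^ (1 - (n:ℤ))) * hcast + h21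
lemma bsgn_not (b : Bool) : bsgn (!b) = -bsgn b := by cases b <;> simp [bsgn]

lemma gridPt_apply {n : ℕ} (hn : 0 < n) (ε : Fin n → Bool) (h : Fin n → ℕ) (i : Fin n) :
    gridPt ε 0 h (n - 1) i =
      (2:ℝ) ^ (-(n:ℤ)) * bsgn (ε i) + (2:ℝ) ^ (1 - (n:ℤ)) * (bsgn (ε i) * h i) := by
  simp only [gridPt, Pi.zero_apply, cast_pred hn, zero_add]
  rw [show (-((n:ℤ) - 1) - 1) = -(n:ℤ) by ring, show (-((n:ℤ) - 1)) = 1 - (n:ℤ) by ring]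

lemma Vn_coords {n : ℕ} (hn : 0 < n) {v : Fin n → ℝ} (hv : v ∈ Vn n) (i : Fin n) :
    ∃ (s : Bool) (t : ℕ), t ≤ 2 ^ (2 * n - 2) ∧ v i = bsgn s * ((2:ℝ) ^ (1 - (n:ℤ)) * t) := by
  obtain ⟨ε, h, δ, hcap, hveq⟩ := hv
  have h21 := zp_one_sub (n:ℤ)
  have hvi : v i = (2:ℝ) ^ (-(n:ℤ)) * bsgn (ε i) + (2:ℝ) ^ (1 - (n:ℤ)) * (bsgn (ε i) * h i)
      + (2:ℝ) ^ (-(n:ℤ)) * bsgn (δ i) := by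
    rw [hveq]
    simp only [vertex]
    rw [gridPt_apply hn, zp_half]
  have hcap' : h i ≤ 2 ^ (2 * n - 2) := le_trans (hcap i) (Nat.sub_le _ _)
  have hcapS : h i + 1 ≤ 2 ^ (2 * n - 2) := by have := hcap i; have h1 : 1 ≤ 2 ^ (2 * n - 2) := Nat.one_le_two_pow; omega
  cases hε : ε i <;> cases hδ : δ i <;> rw [hε, hδ] at hvi
  · exact ⟨false, h i + 1, hcapS, by rw [hvi, bsgn_false]; push_cast; linear_combination h21⟩
  · exact ⟨false, h i, hcap', by rw [hvi, bsgn_false, bsgn_true]; push_cast; ring⟩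
  · exact ⟨true, h i, hcap', by rw [hvi, bsgn_false, bsgn_true]; push_cast; ring⟩
  · exact ⟨true, h i + 1, hcapS, by rw [hvi, bsgn_true]; push_cast; linear_combination -h21⟩

lemma Vn_of_coords {n : ℕ} (hn : 0 < n) {v : Fin n → ℝ}
    (H : ∀ i, ∃ (s : Bool) (t : ℕ), t ≤ 2 ^ (2 * n - 2) ∧
      v i = bsgn s * ((2:ℝ) ^ (1 - (n:ℤ)) * t)) : v ∈ Vn n := by
  choose s t hle hval using H
  refine ⟨s, fun i => min (t i) (2 ^ (2 * n - 2) - 1),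
    fun i => if t i ≤ 2 ^ (2 * n - 2) - 1 then !(s i) else s i,
    fun i => min_le_right _ _, ?_⟩
  funext i
  simp only [vertex]
  rw [gridPt_apply hn, zp_half]
  by_cases hc : t i ≤ 2 ^ (2 * n - 2) - 1
  · rw [if_pos hc, min_eq_left hc, bsgn_not, hval i]
    ring
  · have htop : t i = 2 ^ (2 * n - 2) := by have := hle i; have h1 : 1 ≤ 2 ^ (2 * n - 2) := Nat.one_le_two_pow; omega
    have hge : 2 ^ (2 * n - 2) - 1 ≤ t i := by omega
    rw [if_neg hc, min_eq_right hge, hval i, htop]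
    have hc2 : ((2 ^ (2 * n - 2) : ℕ) : ℝ) = ((2 ^ (2 * n - 2) - 1 : ℕ) : ℝ) + 1 := by
      rw [cast_cap hn]; push_cast; ring
    rw [hc2]
    have h21 := zp_one_sub (n:ℤ)
    linear_combination bsgn (s i) * h21

lemma Pn_congr {n : ℕ} (g g' : (Fin n → ℝ) → ℝ) (hag : ∀ v ∈ Vn n, g v = g' v)
    (u : Fin n → ℝ) : Pn n g u = Pn n g' u := by
  unfold Pn
  refine lam_congr (fun δ => hag _ ?_) _
  exact ⟨epsChoice _, hChoice n _, δ, fun i => min_le_right _ _, rfl⟩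

lemma Pn_fixed {n : ℕ} (hn : 0 < n) (F : (Fin n → ℝ) → ℝ) {v : Fin n → ℝ}
    (hv : v ∈ Vn n) : Pn n F v = F v := by
  have hco := Vn_coords hn hv
  choose s t hle hval using hco
  have habs : ∀ i, |v i| = (2:ℝ) ^ (1 - (n:ℤ)) * t i := by
    intro i
    have hnn : (0:ℝ) ≤ (2:ℝ) ^ (1 - (n:ℤ)) * t i :=
      mul_nonneg (zp_pos _).le (Nat.cast_nonneg _)
    rw [hval i]; cases s i <;> simp [bsgn] <;> exact hnn
  have hclamp : clampCube ((2:ℝ) ^ n) v = v := by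
    funext i
    rw [clampCube_apply]
    apply clamp_of_abs_le
    rw [habs i]
    calc (2:ℝ) ^ (1 - (n:ℤ)) * t i ≤ (2:ℝ) ^ (1 - (n:ℤ)) * ((2 ^ (2 * n - 2) : ℕ) : ℝ) := by
          have : ((t i : ℕ) : ℝ) ≤ ((2 ^ (2 * n - 2) : ℕ) : ℝ) := Nat.cast_le.mpr (hle i)
          exact mul_le_mul_of_nonneg_left this (zp_pos _).le
      _ = (2:ℝ) ^ ((n:ℤ) - 1) := by
          rw [← cap_pow hn]
          congr 1
          push_cast
          ring
  unfold Pn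
  rw [hclamp]
  have hcen : gridPt (epsChoice v) 0 (hChoice n v) (n - 1) = fun i => ctr n (v i) :=
    funext (center_apply hn v)
  rw [hcen]
  set c : Fin n → ℝ := fun i => ctr n (v i) with hc
  have hδ : ∀ i, ∃ b, v i = ctr n (v i) + (2:ℝ) ^ (-(n:ℤ)) * bsgn b :=
    fun i => vtx_scalar hn (s i) (t i) (hle i) (hval i)
  choose b hb using hδ
  have hveq : v = vertex c ((2:ℝ) ^ (1 - (n:ℤ))) b := by
    funext i
    simp only [vertex]
    rw [zp_half]
    exact hb i
  have := lam_vertex F c (ne_of_gt (zp_pos (1 - (n:ℤ)))) b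
  rw [← hveq] at this
  exact this

lemma Pn_clamp_congr {n : ℕ} (g : (Fin n → ℝ) → ℝ) {v1 v2 : Fin n → ℝ}
    (h : clampCube ((2:ℝ) ^ n) v1 = clampCube ((2:ℝ) ^ n) v2) :
    Pn n g v1 = Pn n g v2 := by
  unfold Pn
  rw [h]

lemma rho_tau {m n : ℕ} (u : Fin m → ℝ) (i : Fin n) :
    rho n (tau m u) i = if h : (i:ℕ) < m then u ⟨i, h⟩ else 0 := rfl

lemma tau_pad {m n : ℕ} (hmn : m ≤ n) (u : Fin m → ℝ) :
    tau n (fun i : Fin n => if h : (i:ℕ) < m then u ⟨i, h⟩ else 0) = tau m u := by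
  apply lp.ext
  funext j
  show (if h : j < n then (if h' : ((⟨j, h⟩ : Fin n) : ℕ) < m then u ⟨j, h'⟩ else 0) else 0)
      = (if h : j < m then u ⟨j, h⟩ else 0)
  split_ifs <;> first | rfl | omega
lemma prod_fin_extend {m n : ℕ} (hnm : n ≤ m) (f : Fin n → ℝ) :
    (∏ i : Fin m, (if hi : (i:ℕ) < n then f ⟨i, hi⟩ else 1)) = ∏ i : Fin n, f i := by
  calc (∏ i : Fin m, (if hi : (i:ℕ) < n then f ⟨i, hi⟩ else 1))
      = ∏ j ∈ Finset.range m, (if hj : j < n then f ⟨j, hj⟩ else 1) :=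
        Fin.prod_univ_eq_prod_range (fun j => if hj : j < n then f ⟨j, hj⟩ else 1) m
    _ = ∏ j ∈ Finset.range n, (if hj : j < n then f ⟨j, hj⟩ else 1) :=
        (Finset.prod_subset (Finset.range_subset_range.mpr hnm)
          (fun x _ hx => dif_neg (by simpa using hx))).symm
    _ = ∏ i : Fin n, (if hi : (i:ℕ) < n then f ⟨i, hi⟩ else 1) :=
        (Fin.prod_univ_eq_prod_range (fun j => if hj : j < n then f ⟨j, hj⟩ else 1) n).symm
    _ = ∏ i : Fin n, f i := Finset.prod_congr rfl fun i _ => by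
        rw [dif_pos i.isLt]

lemma vertex_sub {k : ℕ} (c : Fin k → ℝ) (R : ℝ) (δ : Fin k → Bool) (i : Fin k) :
    vertex c R δ i - c i = R / 2 * bsgn (δ i) := by
  simp only [vertex]; ring

lemma Pn_Pn {n m : ℕ} (hn : 0 < n) (hnm : n < m) (F : (Fin n → ℝ) → ℝ) (u : Fin m → ℝ) :
    Pn m (fun z : Fin m → ℝ => Pn n F (fun i : Fin n => z ⟨(i:ℕ), lt_trans i.isLt hnm⟩)) u
      = Pn n F (fun i : Fin n => u ⟨(i:ℕ), lt_trans i.isLt hnm⟩) := by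
  have hm : 0 < m := hn.trans hnm
  have hRm : (2:ℝ) ^ (1 - (m:ℤ)) ≠ 0 := (zp_pos _).ne'
  have hRn : (2:ℝ) ^ (1 - (n:ℤ)) ≠ 0 := (zp_pos _).ne'
  set G : (Fin m → ℝ) → ℝ :=
    fun z => Pn n F (fun i : Fin n => z ⟨(i:ℕ), lt_trans i.isLt hnm⟩) with hG
  set w : Fin m → ℝ := clampCube ((2:ℝ) ^ m) u with hw
  have hwb : ∀ i, |w i| ≤ (2:ℝ) ^ ((m:ℤ) - 1) := fun i => clamp_abs_le m (u i)
  set c : Fin m → ℝ := fun i => ctr m (w i) with hc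
  have hcen : gridPt (epsChoice w) 0 (hChoice m w) (m - 1) = c := funext (center_apply hm w)
  have hwc : ∀ i, |w i - c i| ≤ (2:ℝ) ^ (-(m:ℤ)) := fun i => ctr_mem hm (hwb i)
  have hodd : ∀ i, ∃ k : ℤ, c i = (2:ℝ) ^ (-(m:ℤ)) * (2 * k + 1) := fun i => ctr_odd m (w i)
  have haff : ∀ i' : Fin n, ∃ p q : ℝ,
      ∀ t : ℝ, |t - c ⟨(i':ℕ), lt_trans i'.isLt hnm⟩| ≤ (2:ℝ) ^ (-(m:ℤ)) →
        clamp ((2:ℝ) ^ n) t = p + q * t :=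
    fun i' => clamp_affine_near hn hm (hodd _)
  choose p q hpq using haff
  set cstar : Fin n → ℝ :=
    fun i' => ctr n (clamp ((2:ℝ) ^ n) (c ⟨(i':ℕ), lt_trans i'.isLt hnm⟩)) with hcstar
  set P : Fin m → (Fin n → Bool) → ℝ := fun i δ' =>
    if hi : (i:ℕ) < n then
      (if δ' ⟨(i:ℕ), hi⟩ then
        (p ⟨(i:ℕ), hi⟩ - cstar ⟨(i:ℕ), hi⟩ + (2:ℝ) ^ (-(n:ℤ))) / (2:ℝ) ^ (1 - (n:ℤ))
      else 1 - (p ⟨(i:ℕ), hi⟩ - cstar ⟨(i:ℕ), hi⟩ + (2:ℝ) ^ (-(n:ℤ))) / (2:ℝ) ^ (1 - (n:ℤ)))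
    else 1 with hP
  set Q : Fin m → (Fin n → Bool) → ℝ := fun i δ' =>
    if hi : (i:ℕ) < n then
      (if δ' ⟨(i:ℕ), hi⟩ then q ⟨(i:ℕ), hi⟩ / (2:ℝ) ^ (1 - (n:ℤ))
      else -(q ⟨(i:ℕ), hi⟩ / (2:ℝ) ^ (1 - (n:ℤ))))
    else 0 with hQ
  set C : (Fin n → Bool) → ℝ := fun δ' => F (vertex cstar ((2:ℝ) ^ (1 - (n:ℤ))) δ') with hCdef
  have hO : ∀ z : Fin m → ℝ, (∀ i, |z i - c i| ≤ (2:ℝ) ^ (-(m:ℤ))) →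
      G z = ∑ δ' : Fin n → Bool, (∏ i : Fin m, (P i δ' + Q i δ' * z i)) * C δ' := by
    intro z hz
    have h1 : G z = lam F
        (fun i' : Fin n => ctr n (clamp ((2:ℝ) ^ n) (z ⟨(i':ℕ), lt_trans i'.isLt hnm⟩)))
        ((2:ℝ) ^ (1 - (n:ℤ)))
        (fun i' : Fin n => clamp ((2:ℝ) ^ n) (z ⟨(i':ℕ), lt_trans i'.isLt hnm⟩)) := by
      simp only [hG]
      unfold Pn
      rw [funext (center_apply hn (clampCube ((2:ℝ) ^ n)
        (fun i : Fin n => z ⟨(i:ℕ), lt_trans i.isLt hnm⟩)))]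
      rfl
    have h2 : lam F
        (fun i' : Fin n => ctr n (clamp ((2:ℝ) ^ n) (z ⟨(i':ℕ), lt_trans i'.isLt hnm⟩)))
        ((2:ℝ) ^ (1 - (n:ℤ)))
        (fun i' : Fin n => clamp ((2:ℝ) ^ n) (z ⟨(i':ℕ), lt_trans i'.isLt hnm⟩))
        = lam F cstar ((2:ℝ) ^ (1 - (n:ℤ)))
        (fun i' : Fin n => clamp ((2:ℝ) ^ n) (z ⟨(i':ℕ), lt_trans i'.isLt hnm⟩)) := by
      refine lam_consistent F hRn (fun i' => ?_)
      exact interval_compat hn (clamp_abs_le n _)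
        (psI_subset hn hnm (hodd _) (hz _)) (ctr_lower_grid n _)
    rw [h1, h2]
    unfold lam
    refine Finset.sum_congr rfl fun δ' _ => ?_
    congr 1
    have h3 : ∀ i' : Fin n, clamp ((2:ℝ) ^ n) (z ⟨(i':ℕ), lt_trans i'.isLt hnm⟩)
        = p i' + q i' * z ⟨(i':ℕ), lt_trans i'.isLt hnm⟩ := fun i' => hpq i' _ (hz _)
    rw [← prod_fin_extend hnm.le (fun i' : Fin n =>
      if δ' i' then (clamp ((2:ℝ) ^ n) (z ⟨(i':ℕ), lt_trans i'.isLt hnm⟩) - cstar i'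
          + (2:ℝ) ^ (1 - (n:ℤ)) / 2) / (2:ℝ) ^ (1 - (n:ℤ))
        else 1 - (clamp ((2:ℝ) ^ n) (z ⟨(i':ℕ), lt_trans i'.isLt hnm⟩) - cstar i'
          + (2:ℝ) ^ (1 - (n:ℤ)) / 2) / (2:ℝ) ^ (1 - (n:ℤ)))]
    refine (Finset.prod_congr rfl fun i _ => ?_).symm
    by_cases hi : (i:ℕ) < n
    · have hzh := h3 ⟨(i:ℕ), hi⟩
      have hzi : (⟨((⟨(i:ℕ), hi⟩ : Fin n) : ℕ),
          lt_trans (Fin.isLt ⟨(i:ℕ), hi⟩) hnm⟩ : Fin m) = i := rfl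
      rw [dif_pos hi]
      simp only [hP, hQ]
      rw [dif_pos hi, dif_pos hi, zp_half, hzh, hzi]
      cases δ' ⟨(i:ℕ), hi⟩
      · simp only [Bool.false_eq_true, if_false]
        field_simp
        ring
      · simp only [if_true]
        field_simp
        ring
    · rw [dif_neg hi]
      simp only [hP, hQ]
      rw [dif_neg hi, dif_neg hi]
      ring
  have hmain : Pn m G u = lam G c ((2:ℝ) ^ (1 - (m:ℤ))) w := by
    unfold Pn
    rw [hcen]
  rw [hmain]
  have hvert : ∀ δ : Fin m → Bool,
      G (vertex c ((2:ℝ) ^ (1 - (m:ℤ))) δ)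
        = ∑ δ' : Fin n → Bool,
            (∏ i : Fin m, (P i δ' + Q i δ' * (vertex c ((2:ℝ) ^ (1 - (m:ℤ))) δ) i)) * C δ' := by
    intro δ
    refine hO _ (fun i => ?_)
    rw [vertex_sub, zp_half, abs_mul]
    have h0 : |(2:ℝ) ^ (-(m:ℤ))| = 2 ^ (-(m:ℤ)) := abs_of_nonneg (zp_pos _).le
    cases δ i <;> simp [bsgn, h0] <;>
      exact le_of_eq (abs_of_nonneg (by positivity))
  calc lam G c ((2:ℝ) ^ (1 - (m:ℤ))) w
      = lam (fun z => ∑ δ' : Fin n → Bool, (∏ i : Fin m, (P i δ' + Q i δ' * z i)) * C δ')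
          c ((2:ℝ) ^ (1 - (m:ℤ))) w := lam_congr (fun δ => hvert δ) w
    _ = ∑ δ' : Fin n → Bool, (∏ i : Fin m, (P i δ' + Q i δ' * w i)) * C δ' :=
        lam_multiaffine P Q C c hRm w
    _ = G w := (hO w hwc).symm
    _ = Pn n F (fun i : Fin n => u ⟨(i:ℕ), lt_trans i.isLt hnm⟩) := by
        rw [hG]
        refine Pn_clamp_congr F ?_
        funext i'
        rw [clampCube_apply, clampCube_apply, hw, clampCube_apply]
        exact clamp_clamp hnm.le _

/-- **Statement 11.** For all `m, n ≥ 1` and every Lipschitz `f : ℓ₁ → ℝ` with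
`f(0) = 0`, the operators `Q_n` satisfy `Q_m(Q_n(f)) = Q_{min(m,n)}(f)`. -/
theorem Qn_commute (m n : ℕ) (hm : 0 < m) (hn : 0 < n)
    (f : EllOne → ℝ) (hf : ∃ K : ℝ≥0, LipschitzWith K f) (hf0 : f 0 = 0) :
    Qn m (Qn n f) = Qn (min m n) f := by
  rcases le_or_gt m n with hmn | hnm
  · -- m ≤ n : Q_m Q_n f = Q_m f
    rw [min_eq_left hmn]
    funext x
    simp only [Qn]
    refine Pn_congr _ _ (fun v hv => ?_) _
    -- v ∈ Vn m
    have hpow : (2:ℝ) ^ (1 - (m:ℤ)) = (2:ℝ) ^ (1 - (n:ℤ)) * ((2 ^ (n - m) : ℕ) : ℝ) := by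
      push_cast
      rw [← zpow_natCast (2:ℝ) (n - m), ← zp_add]
      congr 1
      omega
    have hpad : rho n (tau m v) ∈ Vn n := by
      refine Vn_of_coords hn (fun i => ?_)
      rw [rho_tau]
      by_cases hi : (i:ℕ) < m
      · rw [dif_pos hi]
        obtain ⟨s, t, hle, hval⟩ := Vn_coords hm hv ⟨(i:ℕ), hi⟩
        refine ⟨s, t * 2 ^ (n - m), ?_, ?_⟩
        · calc t * 2 ^ (n - m) ≤ 2 ^ (2 * m - 2) * 2 ^ (n - m) :=
              Nat.mul_le_mul_right _ hle
            _ = 2 ^ (2 * m - 2 + (n - m)) := (pow_add 2 _ _).symm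
            _ ≤ 2 ^ (2 * n - 2) := Nat.pow_le_pow_right (by norm_num) (by omega)
        · rw [hval, hpow]
          push_cast
          ring
      · rw [dif_neg hi]
        exact ⟨true, 0, Nat.zero_le _, by simp [bsgn]⟩
    rw [Pn_fixed hn _ hpad]
    congr 1
    have hfn : rho n (tau m v) = fun i : Fin n => if h : (i:ℕ) < m then v ⟨(i:ℕ), h⟩ else 0 :=
      funext fun i => rho_tau v i
    rw [hfn, tau_pad hmn]
  · -- n < m : Q_m Q_n f = Q_n f
    rw [min_eq_right hnm.le]
    funext x
    simp only [Qn]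
    have hrw : ∀ u : Fin m → ℝ,
        rho n (tau m u) = fun i : Fin n => u ⟨(i:ℕ), lt_trans i.isLt hnm⟩ := by
      intro u
      funext i
      rw [rho_tau, dif_pos (lt_trans i.isLt hnm)]
    simp only [hrw]
    have := Pn_Pn hn hnm (fun v => f (tau n v)) (rho m x)
    rw [this]
    rfl
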